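/- The parameter map g of the factorized (low-rank) CDM is an involution: for every parameter quadruple θ = (δ, β, T, C), one has g(g(θ)) = θ. Consequently g is invertible with inverse g⁻¹ = g. -/
import Mathlib


/-- The parameter map `g` of the factorized (low-rank) CDM, sending `(δ, β, T, C)` to
`({δ_i + t_iᵀ (Σ_{j ≠ i} c_j)}_i, β, T, −C)`. -/
noncomputable def cdmG (𝒰 : Type*) [Fintype 𝒰] [DecidableEq 𝒰] (d r : ℕ) :
    ((𝒰 → ℝ) × (Fin d → ℝ) × (𝒰 → Fin r → ℝ) × (𝒰 → Fin r → ℝ)) →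
      ((𝒰 → ℝ) × (Fin d → ℝ) × (𝒰 → Fin r → ℝ) × (𝒰 → Fin r → ℝ)) :=
  fun θ =>
    (fun i => θ.1 i + ∑ k, θ.2.2.1 i k * ∑ j ∈ Finset.univ.erase i, θ.2.2.2 j k,
      θ.2.1, θ.2.2.1, fun j k => -θ.2.2.2 j k)

/-- The parameter map `g` of the factorized (low-rank) CDM is an involution: `g (g θ) = θ`
for all parameter quadruples `θ = (δ, β, T, C)`.  Consequently `g` is invertible with inverse
`g⁻¹ = g`. -/
theorem cdmG_involutive (𝒰 : Type*) [Fintype 𝒰] [DecidableEq 𝒰] (d r : ℕ) :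
    (∀ θ : (𝒰 → ℝ) × (Fin d → ℝ) × (𝒰 → Fin r → ℝ) × (𝒰 → Fin r → ℝ),
        cdmG 𝒰 d r (cdmG 𝒰 d r θ) = θ) ∧
      Function.Bijective (cdmG 𝒰 d r) ∧
      Function.LeftInverse (cdmG 𝒰 d r) (cdmG 𝒰 d r) ∧
      Function.RightInverse (cdmG 𝒰 d r) (cdmG 𝒰 d r) := by
  have hinv : ∀ θ : (𝒰 → ℝ) × (Fin d → ℝ) × (𝒰 → Fin r → ℝ) × (𝒰 → Fin r → ℝ),
      cdmG 𝒰 d r (cdmG 𝒰 d r θ) = θ := by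
    intro θ
    obtain ⟨δ, β, T, C⟩ := θ
    simp only [cdmG, Prod.mk.injEq]
    refine ⟨funext fun i => ?_, trivial, trivial, funext fun j => funext fun k => neg_neg _⟩
    rw [add_assoc, ← Finset.sum_add_distrib]
    simp [← mul_add]
  exact ⟨hinv, Function.Involutive.bijective hinv, hinv, hinv⟩
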